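/- Kernel gradient descent with a positive definite kernel on a convex cost converges to the global infimum: let V be a finite-dimensional real inner product space, A : V → V a self-adjoint positive definite linear operator, and C : V → ℝ a convex differentiable function bounded from below. If v : [0,∞) → V is differentiable and satisfies v'(t) = −A∇C(v(t)) for all t ≥ 0, then C(v(t)) → inf_V C as t → ∞. -/

import Mathlib

open scoped RealInnerProductSpace
open Filter

noncomputable section

/-- Gradient inequality for convex differentiable functions:
`C x + ⟪∇C x, w - x⟫ ≤ C w`. -/
lemma grad_ineq_aux
    (V : Type) [NormedAddCommGroup V] [InnerProductSpace ℝ V] [CompleteSpace V]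
    (C : V → ℝ) (hconv : ConvexOn ℝ Set.univ C) (hdiff : Differentiable ℝ C)
    (x w : V) : C x + ⟪gradient C x, w - x⟫ ≤ C w := by
  set φ : ℝ → ℝ := fun s => C (AffineMap.lineMap x w s) with hφ
  have hφconv : ConvexOn ℝ Set.univ φ := by
    have := hconv.comp_affineMap (AffineMap.lineMap x w : ℝ →ᵃ[ℝ] V)
    rw [Set.preimage_univ] at this
    exact this
  have hline : ∀ s : ℝ, HasDerivAt (fun s : ℝ => AffineMap.lineMap x w s) (w - x) s := by
    intro s
    have h1 : HasDerivAt (fun s : ℝ => s • (w - x) + x) ((1 : ℝ) • (w - x)) s :=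
      ((hasDerivAt_id s).smul_const (w - x)).add_const x
    simpa [AffineMap.lineMap_apply, one_smul] using h1
  have hgrad : HasFDerivAt C (InnerProductSpace.toDual ℝ V (gradient C x))
      (AffineMap.lineMap x w (0 : ℝ)) := by
    have h0 : AffineMap.lineMap x w (0 : ℝ) = x := by simp
    rw [h0]
    exact (hdiff x).hasGradientAt.hasFDerivAt
  have hφ' : HasDerivAt φ ⟪gradient C x, w - x⟫ 0 := by
    have := hgrad.comp_hasDerivAt 0 (hline 0)
    rw [InnerProductSpace.toDual_apply_apply] at this
    exact this
  have hslope := hφconv.le_slope_of_hasDerivAt (Set.mem_univ (0 : ℝ))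
    (Set.mem_univ (1 : ℝ)) one_pos hφ'
  have hφ0 : φ 0 = C x := by
    simp only [hφ, AffineMap.lineMap_apply_zero]
  have hφ1 : φ 1 = C w := by
    simp only [hφ, AffineMap.lineMap_apply_one]
  rw [slope_def_field, hφ0, hφ1] at hslope
  norm_num at hslope ⊢
  linarith [hslope]

/-- **Kernel gradient descent with a positive definite kernel on a convex cost converges to
the global infimum.**  Let `V` be a finite-dimensional real inner product space, `A : V → V` a
self-adjoint positive definite linear operator, and `C : V → ℝ` a convex differentiable
function bounded from below.  If `v` is differentiable with `v'(t) = −A ∇C(v(t))` for all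
`t ≥ 0`, then `C(v(t)) → inf C` as `t → ∞`. -/
theorem kernel_gradient_descent_converges_to_infimum
    (V : Type) [NormedAddCommGroup V] [InnerProductSpace ℝ V] [FiniteDimensional ℝ V]
    (A : V →ₗ[ℝ] V)
    (hsa : ∀ u w : V, ⟪A u, w⟫ = ⟪u, A w⟫)
    (hpd : ∀ u : V, u ≠ 0 → 0 < ⟪A u, u⟫)
    (C : V → ℝ) (hconv : ConvexOn ℝ Set.univ C) (hdiff : Differentiable ℝ C)
    (hbdd : BddBelow (Set.range C))
    (v : ℝ → V) (hv : ∀ t : ℝ, 0 ≤ t → HasDerivAt v (-(A (gradient C (v t)))) t) :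
    Tendsto (fun t => C (v t)) atTop (nhds (⨅ w : V, C w)) := by
  set m : ℝ := ⨅ w : V, C w with hm
  have hm_le : ∀ u : V, m ≤ C u := fun u => ciInf_le hbdd u
  -- nonnegativity of A
  have hA_nonneg : ∀ u : V, 0 ≤ ⟪A u, u⟫ := by
    intro u
    by_cases hu : u = 0
    · simp [hu]
    · exact le_of_lt (hpd u hu)
  -- A is bijective
  have hinj : Function.Injective A := by
    intro a b hab
    by_contra hne
    have h1 := hpd (a - b) (sub_ne_zero.2 hne)
    rw [map_sub, hab, sub_self] at h1
    simp at h1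
  have hsurj : Function.Surjective A := (LinearMap.injective_iff_surjective).1 hinj
  set e : V ≃ₗ[ℝ] V := LinearEquiv.ofBijective A ⟨hinj, hsurj⟩ with he
  set B : V →ₗ[ℝ] V := (e.symm : V →ₗ[ℝ] V) with hB
  have hBA : ∀ u : V, B (A u) = u := fun u => e.symm_apply_apply u
  have hAB : ∀ u : V, A (B u) = u := fun u => e.apply_symm_apply u
  have hB_nonneg : ∀ u : V, 0 ≤ ⟪B u, u⟫ := by
    intro u
    obtain ⟨x, rfl⟩ := hsurj u
    rw [hBA, real_inner_comm]
    exact hA_nonneg x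
  -- q t is the gradient at v t
  set q : ℝ → V := fun t => gradient C (v t) with hq
  -- derivative of C ∘ v
  have hf' : ∀ t : ℝ, 0 ≤ t →
      HasDerivAt (fun s => C (v s)) (-⟪A (q t), q t⟫) t := by
    intro t ht
    have hgrad : HasFDerivAt C (InnerProductSpace.toDual ℝ V (q t)) (v t) :=
      (hdiff (v t)).hasGradientAt.hasFDerivAt
    have := hgrad.comp_hasDerivAt t (hv t ht)
    have heq : (InnerProductSpace.toDual ℝ V (q t)) (-(A (q t))) = -⟪A (q t), q t⟫ := by
      rw [InnerProductSpace.toDual_apply_apply, inner_neg_right]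
      rw [real_inner_comm]
    rw [heq] at this
    exact this
  -- C ∘ v is antitone on [0, ∞)
  have hanti : AntitoneOn (fun s => C (v s)) (Set.Ici 0) := by
    apply antitoneOn_of_hasDerivWithinAt_nonpos (convex_Ici 0)
      (f' := fun t => -⟪A (q t), q t⟫)
    · intro t ht
      exact ((hf' t ht).continuousAt.continuousWithinAt)
    · intro t ht
      rw [interior_Ici] at ht
      exact (hf' t (le_of_lt ht)).hasDerivWithinAt
    · intro t ht
      simp only [neg_nonpos]
      exact hA_nonneg (q t)
  rw [Metric.tendsto_atTop]
  intro ε hε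
  -- choose a near-minimizer w₀
  have hlt : m < m + ε / 2 := by linarith
  obtain ⟨w₀, hw₀⟩ : ∃ w : V, C w < m + ε / 2 := exists_lt_of_ciInf_lt hlt
  by_cases hcase : ∃ t₀ : ℝ, 0 ≤ t₀ ∧ C (v t₀) < m + ε
  · obtain ⟨t₀, ht₀, hCt₀⟩ := hcase
    refine ⟨t₀, fun t ht => ?_⟩
    have ht0 : (0 : ℝ) ≤ t := le_trans ht₀ ht
    have hmono := hanti ht₀ ht0 ht
    have h1 : m ≤ C (v t) := hm_le (v t)
    have h2 : C (v t) < m + ε := lt_of_le_of_lt hmono hCt₀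
    rw [Real.dist_eq, abs_lt]
    constructor <;> linarith
  · exfalso
    push_neg at hcase
    -- Lyapunov function g
    set g : ℝ → ℝ := fun t => ⟪B (v t - w₀), v t - w₀⟫ with hg
    have hg_nonneg : ∀ t : ℝ, 0 ≤ g t := fun t => hB_nonneg _
    -- gradient inequality gives a lower bound on ⟪q t, v t - w₀⟫
    have hkey : ∀ t : ℝ, 0 ≤ t → ε / 2 ≤ ⟪q t, v t - w₀⟫ := by
      intro t ht
      have hgi := grad_ineq_aux V C hconv hdiff (v t) w₀
      have hrw : ⟪gradient C (v t), w₀ - v t⟫ = -⟪q t, v t - w₀⟫ := by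
        rw [← inner_neg_right, neg_sub]
      rw [hrw] at hgi
      have h1 : m + ε ≤ C (v t) := hcase t ht
      linarith [hw₀]
    -- derivative of g
    have hg' : ∀ t : ℝ, 0 ≤ t → HasDerivAt g (-(2 * ⟪q t, v t - w₀⟫)) t := by
      intro t ht
      have hv1 : HasDerivAt (fun s => v s - w₀) (-(A (q t))) t := (hv t ht).sub_const w₀
      set Bc : V →L[ℝ] V := B.toContinuousLinearMap with hBc
      have hv2 : HasDerivAt (fun s => Bc (v s - w₀)) (Bc (-(A (q t)))) t :=
        Bc.hasFDerivAt.comp_hasDerivAt t hv1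
      have hinner := hv2.inner ℝ hv1
      have hBcval : Bc (-(A (q t))) = -(q t) := by
        show B (-(A (q t))) = -(q t)
        rw [map_neg, hBA]
      have heq : ⟪Bc (v t - w₀), -(A (q t))⟫ + ⟪Bc (-(A (q t))), v t - w₀⟫
          = -(2 * ⟪q t, v t - w₀⟫) := by
        rw [hBcval]
        have h1 : ⟪Bc (v t - w₀), -(A (q t))⟫ = -⟪v t - w₀, q t⟫ := by
          show ⟪B (v t - w₀), -(A (q t))⟫ = -⟪v t - w₀, q t⟫
          rw [inner_neg_right, ← hsa, hAB]
        have h2 : ⟪-(q t), v t - w₀⟫ = -⟪q t, v t - w₀⟫ := by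
          rw [inner_neg_left]
        rw [h1, h2, real_inner_comm (v t - w₀) (q t)]
        ring
      rw [heq] at hinner
      exact hinner
    -- h t = g t + ε t is antitone on [0, ∞)
    set h : ℝ → ℝ := fun t => g t + ε * t with hh
    have hh' : ∀ t : ℝ, 0 ≤ t → HasDerivAt h (-(2 * ⟪q t, v t - w₀⟫) + ε) t := by
      intro t ht
      have h2 : HasDerivAt (fun s : ℝ => ε * s) ε t := by
        simpa using (hasDerivAt_id t).const_mul ε
      exact (hg' t ht).add h2
    have hhanti : AntitoneOn h (Set.Ici 0) := by
      apply antitoneOn_of_hasDerivWithinAt_nonpos (convex_Ici 0)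
        (f' := fun t => -(2 * ⟪q t, v t - w₀⟫) + ε)
      · intro t ht
        exact (hh' t ht).continuousAt.continuousWithinAt
      · intro t ht
        rw [interior_Ici] at ht
        exact (hh' t (le_of_lt ht)).hasDerivWithinAt
      · intro t ht
        rw [interior_Ici] at ht
        have := hkey t (le_of_lt ht)
        linarith
    -- contradiction at a large time
    set t₁ : ℝ := g 0 / ε + 1 with ht₁
    have hg0 : 0 ≤ g 0 := hg_nonneg 0
    have ht₁pos : 0 < t₁ := by positivity
    have hht₁ := hhanti (Set.self_mem_Ici) (le_of_lt ht₁pos) (le_of_lt ht₁pos)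
    have hεt₁ : ε * t₁ = g 0 + ε := by
      rw [ht₁, mul_add, mul_div_cancel₀ _ (ne_of_gt hε), mul_one]
    have h0 : h 0 = g 0 := by simp [hh]
    have h1 : h t₁ = g t₁ + ε * t₁ := rfl
    have hgt₁ : 0 ≤ g t₁ := hg_nonneg t₁
    rw [h0, h1, hεt₁] at hht₁
    linarith

end
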